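/- Let 𝒳 ⊆ mod Γ be a d-cluster tilting subcategory and X ∈ 𝒳 with augmented projective resolution ⋯ →^{f₂} P₁ →^{f₁} P₀ →^{f₀} X → 0. Then for each 1 ≤ r ≤ d, the complex P_{r−1} →^{f_{r−1}} ⋯ →^{f₁} P₀ →^{f₀} X → 0 → ⋯ → 0 (padded with zeros to length d+1) is a d-cokernel of f_r in 𝒳, i.e. the complex P_r → P_{r−1} → ⋯ → P₀ → X → 0 → ⋯ → 0 becomes exact upon applying Hom_Γ(−, Y) for every Y ∈ 𝒳. -/

import Mathlib

noncomputable section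
open CategoryTheory CategoryTheory.Limits

def ExtVanish (R : Type) [Ring R] (A B : ModuleCat R) (i : ℕ) : Prop :=
  Subsingleton (((Ext ℤ (ModuleCat R) i).obj (Opposite.op A)).obj B)

/-- A full subcategory (given by a set of objects) of `mod Γ` is `d`-cluster tilting. -/
structure IsdClusterTilting (Γ : Type) [Ring Γ] (d : ℕ) (𝒳 : Set (ModuleCat Γ)) : Prop where
  finite : ∀ X ∈ 𝒳, Module.Finite Γ X
  mem_iff_ext_out : ∀ X : ModuleCat Γ, Module.Finite Γ X →
    (X ∈ 𝒳 ↔ ∀ Y ∈ 𝒳, ∀ i, 1 ≤ i → i ≤ d - 1 → ExtVanish Γ X Y i)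
  mem_iff_ext_in : ∀ X : ModuleCat Γ, Module.Finite Γ X →
    (X ∈ 𝒳 ↔ ∀ Y ∈ 𝒳, ∀ i, 1 ≤ i → i ≤ d - 1 → ExtVanish Γ Y X i)
  left_approx : ∀ M : ModuleCat Γ, Module.Finite Γ M →
    ∃ A ∈ 𝒳, ∃ f : M ⟶ A, ∀ B ∈ 𝒳, ∀ g : M ⟶ B, ∃ h : A ⟶ B, f ≫ h = g
  right_approx : ∀ M : ModuleCat Γ, Module.Finite Γ M →
    ∃ A ∈ 𝒳, ∃ f : A ⟶ M, ∀ B ∈ 𝒳, ∀ g : B ⟶ M, ∃ h : B ⟶ A, h ≫ f = g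

/-- An augmented minimal projective resolution `⋯ → P₁ → P₀ → X → 0`. -/
structure MinProjRes (Γ : Type) [Ring Γ] (X : ModuleCat Γ) where
  P : ℕ → ModuleCat Γ
  proj : ∀ n, Projective (P n)
  pr : P 0 ⟶ X
  δ : ∀ n, P (n + 1) ⟶ P n
  epi : Function.Surjective pr
  exact0 : Function.Exact (δ 0) pr
  exact : ∀ n, Function.Exact (δ (n + 1)) (δ n)
  min0 : ∀ g : P 0 ⟶ P 0, g ≫ pr = pr → IsIso g
  min : ∀ n, ∀ g : P (n + 1) ⟶ P (n + 1), g ≫ δ n = δ n → IsIso g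

/-- The `i`-th syzygy of `X` defined by a minimal projective resolution. -/
def MinProjRes.syz {Γ : Type} [Ring Γ] {X : ModuleCat Γ} (R : MinProjRes Γ X) :
    ℕ → ModuleCat Γ
  | 0 => X
  | 1 => ModuleCat.of Γ (LinearMap.ker R.pr.hom)
  | (n + 2) => ModuleCat.of Γ (LinearMap.ker (R.δ n).hom)

/-- `W` has no non-zero projective direct summand. -/
def NoNonzeroProjSummand (Γ : Type) [Ring Γ] (W : ModuleCat Γ) : Prop :=
  ∀ Q : ModuleCat Γ, Projective Q →
    (∃ (s : Q ⟶ W) (r : W ⟶ Q), s ≫ r = 𝟙 Q) → Limits.IsZero Q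

/-- An augmented projective resolution `⋯ → P₁ → P₀ → X → 0` (not necessarily minimal). -/
structure ProjRes (Γ : Type) [Ring Γ] (X : ModuleCat Γ) where
  P : ℕ → ModuleCat Γ
  proj : ∀ n, Projective (P n)
  pr : P 0 ⟶ X
  δ : ∀ n, P (n + 1) ⟶ P n
  epi : Function.Surjective pr
  exact0 : Function.Exact (δ 0) pr
  exact : ∀ n, Function.Exact (δ (n + 1)) (δ n)

namespace ProjResAux

variable {Γ : Type} [Ring Γ] {X : ModuleCat Γ} (R : ProjRes Γ X)

def cx : ChainComplex (ModuleCat Γ) ℕ :=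
  ChainComplex.of R.P R.δ (fun n => by
    ext x
    exact (R.exact n).apply_apply_eq_zero x)

@[simp] lemma cx_X (n : ℕ) : (cx R).X n = R.P n := rfl

@[simp] lemma cx_d (n : ℕ) : (cx R).d (n + 1) n = R.δ n := ChainComplex.of_d _ _ _

def res : ProjectiveResolution X where
  complex := cx R
  projective n := R.proj n
  π := (ChainComplex.toSingle₀Equiv _ _).symm ⟨R.pr, by
    rw [cx_d]
    ext x
    exact R.exact0.apply_apply_eq_zero x⟩
  quasiIso := ⟨fun n => by
    cases n with
    | zero =>
      have h0 : R.δ 0 ≫ R.pr = 0 := by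
        ext x
        exact R.exact0.apply_apply_eq_zero x
      rw [ChainComplex.quasiIsoAt₀_iff, ShortComplex.quasiIso_iff_of_zeros']
      · refine (ShortComplex.exact_and_epi_g_iff_of_iso
          (S₂ := ShortComplex.mk (R.δ 0) R.pr h0) ?_).2 ⟨?_, ?_⟩
        · refine ShortComplex.isoMk (Iso.refl _) (Iso.refl _) (Iso.refl _) ?_ ?_
          · dsimp
            exact (Category.id_comp _).trans (Category.comp_id _).symm
          · dsimp
            erw [Category.id_comp]
        · rw [ShortComplex.moduleCat_exact_iff]
          intro x hx
          exact (R.exact0 x).1 hx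
        · rw [ModuleCat.epi_iff_surjective]
          exact R.epi
      all_goals rfl
    | succ n =>
      rw [quasiIsoAt_iff_exactAt']
      · rw [HomologicalComplex.exactAt_iff' _ (n + 2) (n + 1) n
          (by simp) (by simp), ShortComplex.moduleCat_exact_iff]
        intro x hx
        dsimp at x hx ⊢
        change ((cx R).d (n + 1) n) x = 0 at hx
        change ∃ x₁, ((cx R).d (n + 2) (n + 1)) x₁ = x
        rw [cx_d] at hx ⊢
        exact (R.exact n x).1 hx
      · apply ChainComplex.exactAt_succ_single_obj⟩

end ProjResAux

/-- For `X ∈ 𝒳` with projective resolution as above and `1 ≤ r ≤ d`, the truncation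
`P_{r-1} → ⋯ → P₀ → X → 0 → ⋯ → 0` is a `d`-cokernel of `f_r` in `𝒳`: applying
`Hom_Γ(-, Y)` for `Y ∈ 𝒳` gives an exact sequence. -/
theorem proj_res_is_d_cokernel
    (k Γ : Type) [Field k] [Ring Γ] [Algebra k Γ] [FiniteDimensional k Γ]
    (d : ℕ) (hd : 1 ≤ d)
    (𝒳 : Set (ModuleCat Γ)) (h𝒳 : IsdClusterTilting Γ d 𝒳)
    (X : ModuleCat Γ) (hX : X ∈ 𝒳) (R : ProjRes Γ X)
    (r : ℕ) (hr1 : 1 ≤ r) (hr2 : r ≤ d) (Y : ModuleCat Γ) (hY : Y ∈ 𝒳) :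
    Function.Injective (fun u : X ⟶ Y => R.pr ≫ u) ∧
    Function.Exact (fun u : X ⟶ Y => R.pr ≫ u) (fun v : R.P 0 ⟶ Y => R.δ 0 ≫ v) ∧
    ∀ i, i + 2 ≤ r → Function.Exact (fun u : R.P i ⟶ Y => R.δ i ≫ u)
      (fun v : R.P (i + 1) ⟶ Y => R.δ (i + 1) ≫ v) := by
  have h0 : R.δ 0 ≫ R.pr = 0 := by
    ext x
    exact R.exact0.apply_apply_eq_zero x
  refine ⟨?_, ?_, ?_⟩
  · intro u u' h
    ext x
    obtain ⟨p, rfl⟩ := R.epi x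
    exact ConcreteCategory.congr_hom (h : R.pr ≫ u = R.pr ≫ u') p
  · intro v
    constructor
    · intro hv
      have hv' : ∀ p, v (R.δ 0 p) = 0 := fun p =>
        ConcreteCategory.congr_hom (hv : R.δ 0 ≫ v = 0) p
      have hle : LinearMap.ker R.pr.hom ≤
          LinearMap.ker v.hom := by
        intro x hx
        obtain ⟨p, hp⟩ := (R.exact0 x).1 hx
        rw [LinearMap.mem_ker, ← hp]
        exact hv' p
      set e := LinearMap.quotKerEquivOfSurjective R.pr.hom R.epi with he
      refine ⟨ModuleCat.ofHom ((LinearMap.ker R.pr.hom).liftQ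
        v.hom hle ∘ₗ e.symm.toLinearMap), ?_⟩
      ext p
      have hmk : e.symm (R.pr p) = Submodule.Quotient.mk p := by
        apply e.injective
        rw [LinearEquiv.apply_symm_apply]
        simp [he, LinearMap.quotKerEquivOfSurjective]
      show ((LinearMap.ker R.pr.hom).liftQ
        v.hom hle) (e.symm (R.pr p)) = v p
      rw [hmk]
      rfl
    · rintro ⟨u, rfl⟩
      show R.δ 0 ≫ R.pr ≫ u = 0
      rw [← Category.assoc, h0, zero_comp]
  · intro i hi
    have hext : ExtVanish Γ X Y (i + 1) :=
      ((h𝒳.mem_iff_ext_out X (h𝒳.finite X hX)).1 hX) Y hY (i + 1)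
        (by omega) (by omega)
    let PR := ProjResAux.res R
    have hsub : Subsingleton (((ProjResAux.cx R).linearYonedaObj ℤ Y).homology (i + 1)) := by
      have : Subsingleton ((forget (ModuleCat ℤ)).obj
          (((Ext ℤ (ModuleCat Γ) (i + 1)).obj (Opposite.op X)).obj Y)) := hext
      exact Equiv.subsingleton ((forget (ModuleCat ℤ)).mapIso
        (PR.isoExt (i + 1) Y)).toEquiv.symm
    have hEx : (((ProjResAux.cx R).linearYonedaObj ℤ Y).sc' i (i + 1) (i + 2)).Exact := by
      have := (HomologicalComplex.exactAt_iff_isZero_homology _ (i + 1)).2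
        (ModuleCat.isZero_of_subsingleton (((ProjResAux.cx R).linearYonedaObj ℤ Y).homology (i + 1)))
      rwa [HomologicalComplex.exactAt_iff' _ i (i + 1) (i + 2)
        (by simp) (by simp)] at this
    rw [ShortComplex.moduleCat_exact_iff] at hEx
    intro v
    constructor
    · intro hv
      obtain ⟨u, hu⟩ := hEx v (by
        show Linear.leftComp ℤ Y ((ProjResAux.cx R).d (i + 2) (i + 1)) v = 0
        rw [ProjResAux.cx_d]
        exact hv)
      refine ⟨u, ?_⟩
      have : Linear.leftComp ℤ Y ((ProjResAux.cx R).d (i + 1) i) u = v := hu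
      rw [ProjResAux.cx_d] at this
      exact this
    · rintro ⟨u, rfl⟩
      show R.δ (i + 1) ≫ R.δ i ≫ u = 0
      rw [← Category.assoc]
      have : R.δ (i + 1) ≫ R.δ i = 0 := by
        ext x
        exact (R.exact i).apply_apply_eq_zero x
      rw [this, zero_comp]
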